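/- For every real s > 1 and every real t > 0, t^{1/s} − s·log(1/(1 − s^{−1})) ≤ sup_{j∈ℕ₀} log( t^j/(j!)^s ) ≤ s·t^{1/s}. -/

import Mathlib

/-- For every real `s > 1` and `t > 0`,
`t^{1/s} − s·log(1/(1 − s⁻¹)) ≤ sup_{j∈ℕ₀} log(t^j/(j!)^s) ≤ s·t^{1/s}`. -/
theorem gevrey_sup_log_bounds (s t : ℝ) (hs : 1 < s) (ht : 0 < t) :
    t ^ (1 / s) - s * Real.log (1 / (1 - s⁻¹)) ≤
        (⨆ j : ℕ, Real.log (t ^ j / ((Nat.factorial j : ℝ)) ^ s)) ∧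
      (⨆ j : ℕ, Real.log (t ^ j / ((Nat.factorial j : ℝ)) ^ s)) ≤ s * t ^ (1 / s) := by
  have hs0 : (0:ℝ) < s := lt_trans one_pos hs
  set u : ℝ := t ^ (1 / s) with hu_def
  have hu : 0 < u := Real.rpow_pos_of_pos ht _
  have hlogu : Real.log u = (1 / s) * Real.log t := Real.log_rpow ht _
  -- the key identity
  have hkey : ∀ j : ℕ, Real.log (t ^ j / ((Nat.factorial j : ℝ)) ^ s)
      = s * Real.log (u ^ j / (Nat.factorial j : ℝ)) := by
    intro j
    have hfac : (0:ℝ) < (Nat.factorial j : ℝ) := by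
      exact_mod_cast Nat.factorial_pos j
    rw [Real.log_div (by positivity) (by positivity),
        Real.log_div (by positivity) (ne_of_gt hfac),
        Real.log_pow, Real.log_pow, Real.log_rpow hfac, hlogu]
    field_simp
  -- each term is bounded by s * u
  have hterm : ∀ j : ℕ, Real.log (t ^ j / ((Nat.factorial j : ℝ)) ^ s) ≤ s * u := by
    intro j
    rw [hkey j]
    have h1 : u ^ j / (Nat.factorial j : ℝ) ≤ Real.exp u :=
      Real.pow_div_factorial_le_exp u hu.le j
    have h2 : Real.log (u ^ j / (Nat.factorial j : ℝ)) ≤ u := by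
      have := Real.log_le_log (by positivity) h1
      rwa [Real.log_exp] at this
    exact mul_le_mul_of_nonneg_left h2 hs0.le
  have hbdd : BddAbove (Set.range fun j : ℕ =>
      Real.log (t ^ j / ((Nat.factorial j : ℝ)) ^ s)) := by
    refine ⟨s * u, ?_⟩
    rintro x ⟨j, rfl⟩
    exact hterm j
  set S : ℝ := ⨆ j : ℕ, Real.log (t ^ j / ((Nat.factorial j : ℝ)) ^ s) with hS_def
  have hupper : S ≤ s * u := ciSup_le hterm
  constructor
  · -- lower bound
    have hle : ∀ j : ℕ, u ^ j / (Nat.factorial j : ℝ) ≤ Real.exp (S / s) := by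
      intro j
      have h1 : Real.log (t ^ j / ((Nat.factorial j : ℝ)) ^ s) ≤ S := le_ciSup hbdd j
      rw [hkey j] at h1
      have h2 : Real.log (u ^ j / (Nat.factorial j : ℝ)) ≤ S / s :=
        (le_div_iff₀' hs0).mpr h1
      calc u ^ j / (Nat.factorial j : ℝ)
          = Real.exp (Real.log (u ^ j / (Nat.factorial j : ℝ))) := by
            rw [Real.exp_log (by positivity)]
        _ ≤ Real.exp (S / s) := Real.exp_le_exp.mpr h2
    -- exp(u/s) = ∑ (u/s)^j / j! ≤ exp(S/s) * (1 - 1/s)⁻¹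
    have hsum : HasSum (fun j : ℕ => (u / s) ^ j / (Nat.factorial j : ℝ))
        (Real.exp (u / s)) := by
      rw [Real.exp_eq_exp_ℝ]
      exact NormedSpace.expSeries_div_hasSum_exp (u / s)
    have hr0 : (0:ℝ) ≤ 1 / s := by positivity
    have hr1 : 1 / s < 1 := by
      rw [div_lt_one hs0]; exact hs
    have hgeo : Summable (fun j : ℕ => Real.exp (S / s) * (1 / s) ^ j) :=
      (summable_geometric_of_lt_one hr0 hr1).mul_left _
    have hcmp : ∀ j : ℕ, (u / s) ^ j / (Nat.factorial j : ℝ)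
        ≤ Real.exp (S / s) * (1 / s) ^ j := by
      intro j
      have : (u / s) ^ j / (Nat.factorial j : ℝ)
          = u ^ j / (Nat.factorial j : ℝ) * (1 / s) ^ j := by
        rw [div_pow, div_pow, one_pow]
        ring
      rw [this]
      exact mul_le_mul_of_nonneg_right (hle j) (by positivity)
    have hmain : Real.exp (u / s) ≤ Real.exp (S / s) * (1 - 1 / s)⁻¹ := by
      have := hsum.tsum_eq
      calc Real.exp (u / s) = ∑' j : ℕ, (u / s) ^ j / (Nat.factorial j : ℝ) := this.symm
        _ ≤ ∑' j : ℕ, Real.exp (S / s) * (1 / s) ^ j :=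
            Summable.tsum_le_tsum hcmp hsum.summable hgeo
        _ = Real.exp (S / s) * ∑' j : ℕ, (1 / s) ^ j := by rw [tsum_mul_left]
        _ = Real.exp (S / s) * (1 - 1 / s)⁻¹ := by
            rw [tsum_geometric_of_lt_one hr0 hr1]
    have h1s : (0:ℝ) < 1 - 1 / s := by
      rw [sub_pos]; exact hr1
    have hlog : u / s ≤ S / s + Real.log ((1 - 1 / s)⁻¹) := by
      have := Real.log_le_log (Real.exp_pos _) hmain
      rwa [Real.log_exp, Real.log_mul (Real.exp_pos _).ne' (by positivity),
        Real.log_exp] at this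
    have : u ≤ S + s * Real.log ((1 - 1 / s)⁻¹) := by
      have h := mul_le_mul_of_nonneg_left hlog hs0.le
      rw [mul_add] at h
      rw [mul_div_cancel₀ _ hs0.ne', mul_div_cancel₀ _ hs0.ne'] at h
      linarith
    have heq : (1 : ℝ) / (1 - s⁻¹) = (1 - 1 / s)⁻¹ := by
      rw [one_div, one_div]
    rw [heq]
    linarith
  · exact hupper
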